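/- The set n1 of nilpotent matrices belonging to m is a linear subspace of dimension 3, namely n1 = span_ℂ{X1 − X2, X3, X1 + X2 − 2·X4}, it is an ideal of the Lie algebra m, and m decomposes as a direct sum of vector spaces m = n1 ⊕ ℂ·X4. -/

import Mathlib

open Matrix

noncomputable section

def X1 (α β : ℂ) : Matrix (Fin 4) (Fin 4) ℂ :=
  !![1,1,0,1; 1,1,0,0; α,β,0,0; 0,0,0,0]

def X2 (α β : ℂ) : Matrix (Fin 4) (Fin 4) ℂ :=
  !![1,1,0,0; 1,1,0,1; β-1,α+1,0,0; 0,0,0,0]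

def X3 : Matrix (Fin 4) (Fin 4) ℂ :=
  !![0,0,0,0; 0,0,0,0; 0,0,0,1; 0,0,0,0]

/-- The ℂ-linear span of {X1, X2, X3}. -/
def h (α β : ℂ) : Submodule ℂ (Matrix (Fin 4) (Fin 4) ℂ) :=
  Submodule.span ℂ {X1 α β, X2 α β, X3}
def X4 (α β : ℂ) : Matrix (Fin 4) (Fin 4) ℂ :=
  !![1,1,0,1/2; 1,1,0,1/2; (α+β)/2,(α+β)/2,0,(α+β)/4; 0,0,0,0]

/-- The ℂ-linear span of {X1, X2, X3, X4}. -/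
def m (α β : ℂ) : Submodule ℂ (Matrix (Fin 4) (Fin 4) ℂ) :=
  Submodule.span ℂ {X1 α β, X2 α β, X3, X4 α β}

/-- "Shape" matrices: every element of n1 has this form. -/
def Sh (p q r : ℂ) : Matrix (Fin 4) (Fin 4) ℂ :=
  !![0,0,0,p; 0,0,0,-p; q,-q,0,r; 0,0,0,0]

lemma N1_eq (α β : ℂ) :
    X1 α β - X2 α β = Sh 1 (α - β + 1) 0 := by
  ext i j
  fin_cases i <;> fin_cases j <;>
    simp [X1, X2, Sh, Matrix.vecHead, Matrix.vecTail] <;> ring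

lemma X3_eq : X3 = Sh 0 0 1 := by
  ext i j
  fin_cases i <;> fin_cases j <;>
    simp [X3, Sh, Matrix.vecHead, Matrix.vecTail]

lemma N3_eq (α β : ℂ) :
    X1 α β + X2 α β - (2 : ℂ) • X4 α β = Sh 0 (-1) (-(α + β) / 2) := by
  ext i j
  fin_cases i <;> fin_cases j <;>
    simp [X1, X2, X4, Sh, Matrix.vecHead, Matrix.vecTail] <;> ring

lemma Sh_comb (α β p q r : ℂ) :
    Sh p q r = p • Sh 1 (α - β + 1) 0
      + (r + (p * (α - β + 1) - q) * (α + β) / 2) • Sh 0 0 1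
      + (p * (α - β + 1) - q) • Sh 0 (-1) (-(α + β) / 2) := by
  ext i j
  fin_cases i <;> fin_cases j <;>
    simp [Sh, Matrix.vecHead, Matrix.vecTail] <;> ring

set_option maxHeartbeats 1000000 in
lemma Sh_mul (a b c p q r : ℂ) : Sh a b c * Sh p q r = Sh 0 0 (2*b*p) := by
  ext i j
  fin_cases i <;> fin_cases j <;>
    simp [Sh, Matrix.mul_apply, Fin.sum_univ_four,
      Matrix.vecHead, Matrix.vecTail] <;> ring

lemma Sh_zero : Sh 0 0 0 = 0 := by
  ext i j
  fin_cases i <;> fin_cases j <;>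
    simp [Sh, Matrix.vecHead, Matrix.vecTail]

lemma Sh_cube (p q r : ℂ) : Sh p q r ^ 3 = 0 := by
  rw [pow_succ, pow_succ, pow_one, Sh_mul, Sh_mul]
  simpa using Sh_zero

lemma mem_n1_iff (α β : ℂ) (M : Matrix (Fin 4) (Fin 4) ℂ) :
    M ∈ Submodule.span ℂ
      ({X1 α β - X2 α β, X3, X1 α β + X2 α β - (2 : ℂ) • X4 α β} :
        Set (Matrix (Fin 4) (Fin 4) ℂ)) ↔ ∃ p q r, M = Sh p q r := by
  constructor
  · intro hM
    rw [Submodule.mem_span_insert] at hM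
    obtain ⟨c1, M1, hM1, rfl⟩ := hM
    rw [Submodule.mem_span_insert] at hM1
    obtain ⟨c2, M2, hM2, rfl⟩ := hM1
    rw [Submodule.mem_span_singleton] at hM2
    obtain ⟨c3, rfl⟩ := hM2
    refine ⟨c1, c1 * (α - β + 1) - c3, c2 - c3 * (α + β) / 2, ?_⟩
    rw [N1_eq, X3_eq, N3_eq]
    ext i j
    fin_cases i <;> fin_cases j <;>
      simp [Sh, Matrix.vecHead, Matrix.vecTail] <;> ring
  · rintro ⟨p, q, r, rfl⟩
    have key := Sh_comb α β p q r
    rw [← N1_eq, ← X3_eq, ← N3_eq] at key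
    rw [key]
    refine add_mem (add_mem (Submodule.smul_mem _ _ (Submodule.subset_span ?_))
      (Submodule.smul_mem _ _ (Submodule.subset_span ?_)))
      (Submodule.smul_mem _ _ (Submodule.subset_span ?_))
    · exact Set.mem_insert _ _
    · exact Set.mem_insert_of_mem _ (Set.mem_insert _ _)
    · exact Set.mem_insert_of_mem _ (Set.mem_insert_of_mem _ rfl)

set_option maxHeartbeats 1000000 in
lemma lie_X1_Sh (α β p q r : ℂ) :
    ⁅X1 α β, Sh p q r⁆ = Sh 0 0 ((α - β) * p - q) := by
  ext i j
  fin_cases i <;> fin_cases j <;>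
    simp [Ring.lie_def, X1, Sh, Matrix.mul_apply, Fin.sum_univ_four,
      Matrix.vecHead, Matrix.vecTail] <;> ring

set_option maxHeartbeats 1000000 in
lemma lie_X2_Sh (α β p q r : ℂ) :
    ⁅X2 α β, Sh p q r⁆ = Sh 0 0 ((β - α - 2) * p + q) := by
  ext i j
  fin_cases i <;> fin_cases j <;>
    simp [Ring.lie_def, X2, Sh, Matrix.mul_apply, Fin.sum_univ_four,
      Matrix.vecHead, Matrix.vecTail] <;> ring

set_option maxHeartbeats 1000000 in
lemma lie_X3_Sh (p q r : ℂ) : ⁅X3, Sh p q r⁆ = 0 := by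
  ext i j
  fin_cases i <;> fin_cases j <;>
    simp [Ring.lie_def, X3, Sh, Matrix.mul_apply, Fin.sum_univ_four,
      Matrix.vecHead, Matrix.vecTail] <;> ring

set_option maxHeartbeats 1000000 in
lemma lie_X4_Sh (α β p q r : ℂ) : ⁅X4 α β, Sh p q r⁆ = 0 := by
  ext i j
  fin_cases i <;> fin_cases j <;>
    simp [Ring.lie_def, X4, Sh, Matrix.mul_apply, Fin.sum_univ_four,
      Matrix.vecHead, Matrix.vecTail] <;> ring

lemma X1_decomp (α β : ℂ) :
    X1 α β = (1/2 : ℂ) • Sh 1 (α - β + 1) 0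
      + ((1/2 : ℂ) • Sh 0 (-1) (-(α + β) / 2) + X4 α β) := by
  ext i j
  fin_cases i <;> fin_cases j <;>
    simp [X1, X4, Sh, Matrix.vecHead, Matrix.vecTail] <;> ring

lemma X2_decomp (α β : ℂ) :
    X2 α β = (-(1/2) : ℂ) • Sh 1 (α - β + 1) 0
      + ((1/2 : ℂ) • Sh 0 (-1) (-(α + β) / 2) + X4 α β) := by
  ext i j
  fin_cases i <;> fin_cases j <;>
    simp [X2, X4, Sh, Matrix.vecHead, Matrix.vecTail] <;> ring

/-- The nilpotent elements of m form the 3-dimensional subspace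
n1 = span{X1−X2, X3, X1+X2−2X4}, an ideal of m, and m = n1 ⊕ ℂ·X4. -/
theorem nilpotent_set_of_m (α β : ℂ) (hαβ : α + β ≠ 0) :
    {X : Matrix (Fin 4) (Fin 4) ℂ | X ∈ m α β ∧ IsNilpotent X}
      = ↑(Submodule.span ℂ {X1 α β - X2 α β, X3, X1 α β + X2 α β - (2 : ℂ) • X4 α β}) ∧
    Module.finrank ℂ (Submodule.span ℂ
      ({X1 α β - X2 α β, X3, X1 α β + X2 α β - (2 : ℂ) • X4 α β} :
        Set (Matrix (Fin 4) (Fin 4) ℂ))) = 3 ∧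
    (∀ Y ∈ m α β, ∀ Z ∈ Submodule.span ℂ
      ({X1 α β - X2 α β, X3, X1 α β + X2 α β - (2 : ℂ) • X4 α β} :
        Set (Matrix (Fin 4) (Fin 4) ℂ)),
      ⁅Y, Z⁆ ∈ Submodule.span ℂ
        ({X1 α β - X2 α β, X3, X1 α β + X2 α β - (2 : ℂ) • X4 α β} :
          Set (Matrix (Fin 4) (Fin 4) ℂ))) ∧
    Submodule.span ℂ ({X1 α β - X2 α β, X3, X1 α β + X2 α β - (2 : ℂ) • X4 α β} :
        Set (Matrix (Fin 4) (Fin 4) ℂ)) ⊔ Submodule.span ℂ {X4 α β} = m α β ∧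
    Submodule.span ℂ ({X1 α β - X2 α β, X3, X1 α β + X2 α β - (2 : ℂ) • X4 α β} :
        Set (Matrix (Fin 4) (Fin 4) ℂ)) ⊓ Submodule.span ℂ {X4 α β} = ⊥ := by
  set n1 : Submodule ℂ (Matrix (Fin 4) (Fin 4) ℂ) :=
    Submodule.span ℂ ({X1 α β - X2 α β, X3, X1 α β + X2 α β - (2 : ℂ) • X4 α β} :
      Set (Matrix (Fin 4) (Fin 4) ℂ)) with hn1
  -- membership of the three generators of n1 in m
  have hX1m : X1 α β ∈ m α β := Submodule.subset_span (Set.mem_insert _ _)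
  have hX2m : X2 α β ∈ m α β :=
    Submodule.subset_span (Set.mem_insert_of_mem _ (Set.mem_insert _ _))
  have hX3m : X3 ∈ m α β :=
    Submodule.subset_span
      (Set.mem_insert_of_mem _ (Set.mem_insert_of_mem _ (Set.mem_insert _ _)))
  have hX4m : X4 α β ∈ m α β :=
    Submodule.subset_span (Set.mem_insert_of_mem _
      (Set.mem_insert_of_mem _ (Set.mem_insert_of_mem _ rfl)))
  have hN1n1 : X1 α β - X2 α β ∈ n1 := Submodule.subset_span (Set.mem_insert _ _)
  have hX3n1 : X3 ∈ n1 :=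
    Submodule.subset_span (Set.mem_insert_of_mem _ (Set.mem_insert _ _))
  have hN3n1 : X1 α β + X2 α β - (2 : ℂ) • X4 α β ∈ n1 :=
    Submodule.subset_span
      (Set.mem_insert_of_mem _ (Set.mem_insert_of_mem _ rfl))
  -- the sup decomposition
  have hsup : n1 ⊔ Submodule.span ℂ {X4 α β} = m α β := by
    apply le_antisymm
    · apply sup_le
      · rw [hn1]
        apply Submodule.span_le.mpr
        rintro x (rfl | rfl | rfl)
        · exact sub_mem hX1m hX2m
        · exact hX3m
        · exact sub_mem (add_mem hX1m hX2m) (Submodule.smul_mem _ _ hX4m)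
      · exact Submodule.span_le.mpr (by rintro x rfl; exact hX4m)
    · apply Submodule.span_le.mpr
      have hN1 := hN1n1; have hN3 := hN3n1
      rw [N1_eq] at hN1; rw [N3_eq] at hN3
      have hX4s : X4 α β ∈ Submodule.span ℂ ({X4 α β} : Set _) :=
        Submodule.subset_span rfl
      rintro x (rfl | rfl | rfl | rfl)
      · rw [X1_decomp α β]
        exact add_mem (Submodule.mem_sup_left (Submodule.smul_mem _ _ hN1))
          (add_mem (Submodule.mem_sup_left (Submodule.smul_mem _ _ hN3))
            (Submodule.mem_sup_right hX4s))
      · rw [X2_decomp α β]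
        exact add_mem (Submodule.mem_sup_left (Submodule.smul_mem _ _ hN1))
          (add_mem (Submodule.mem_sup_left (Submodule.smul_mem _ _ hN3))
            (Submodule.mem_sup_right hX4s))
      · exact Submodule.mem_sup_left hX3n1
      · exact Submodule.mem_sup_right hX4s
  refine ⟨?_, ?_, ?_, hsup, ?_⟩
  · -- set of nilpotent elements of m equals n1
    ext X
    simp only [Set.mem_setOf_eq, SetLike.mem_coe]
    constructor
    · rintro ⟨hXm, hnil⟩
      rw [← hsup, Submodule.mem_sup] at hXm
      obtain ⟨y, hy, z, hz, rfl⟩ := hXm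
      rw [Submodule.mem_span_singleton] at hz
      obtain ⟨c, rfl⟩ := hz
      obtain ⟨p, q, r, rfl⟩ := (mem_n1_iff α β y).mp hy
      have htr : (Sh p q r + c • X4 α β).trace = 2 * c := by
        simp [Matrix.trace, Matrix.diag, Fin.sum_univ_four, Sh, X4,
          Matrix.vecHead, Matrix.vecTail]
        ring
      have h0 : (Sh p q r + c • X4 α β).trace = 0 := by
        have := Matrix.isNilpotent_trace_of_isNilpotent hnil
        exact this.eq_zero
      rw [htr] at h0
      have hc : c = 0 := by linear_combination h0 / 2
      rw [hc]
      simpa using hy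
    · intro hX
      refine ⟨?_, ?_⟩
      · rw [← hsup]
        exact Submodule.mem_sup_left hX
      · obtain ⟨p, q, r, rfl⟩ := (mem_n1_iff α β X).mp hX
        exact ⟨3, Sh_cube p q r⟩
  · -- dimension 3
    have hli : LinearIndependent ℂ
        ![X1 α β - X2 α β, X3, X1 α β + X2 α β - (2 : ℂ) • X4 α β] := by
      rw [N1_eq, X3_eq, N3_eq]
      rw [Fintype.linearIndependent_iff]
      intro g hg
      have hsum : g 0 • Sh 1 (α - β + 1) 0 + g 1 • Sh 0 0 1
          + g 2 • Sh 0 (-1) (-(α + β) / 2) = 0 := by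
        rw [← hg]; simp [Fin.sum_univ_three]
      have e03 := congrFun (congrFun hsum 0) 3
      have e20 := congrFun (congrFun hsum 2) 0
      have e23 := congrFun (congrFun hsum 2) 3
      simp [Sh, Matrix.vecHead, Matrix.vecTail] at e03 e20 e23
      have h0 : g 0 = 0 := e03
      have h2 : g 2 = 0 := by
        rw [h0] at e20; simpa using e20
      have h1 : g 1 = 0 := by
        rw [h2] at e23; simpa using e23
      intro i; fin_cases i <;> assumption
    have hcard := finrank_span_eq_card hli
    have hrange : Set.range ![X1 α β - X2 α β, X3, X1 α β + X2 α β - (2 : ℂ) • X4 α β]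
        = ({X1 α β - X2 α β, X3, X1 α β + X2 α β - (2 : ℂ) • X4 α β} :
          Set (Matrix (Fin 4) (Fin 4) ℂ)) := by
      apply Set.ext
      intro x
      simp only [Matrix.range_cons, Matrix.range_empty, Set.union_empty,
        Set.mem_union, Set.mem_singleton_iff, Set.mem_insert_iff]
    rw [hrange] at hcard
    simpa using hcard
  · -- ideal property
    intro Y hY Z hZ
    obtain ⟨p, q, r, rfl⟩ := (mem_n1_iff α β Z).mp hZ
    refine Submodule.span_induction ?_ ?_ ?_ ?_ hY
    · rintro x (rfl | rfl | rfl | rfl)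
      · rw [lie_X1_Sh]
        exact (mem_n1_iff α β _).mpr ⟨0, 0, _, rfl⟩
      · rw [lie_X2_Sh]
        exact (mem_n1_iff α β _).mpr ⟨0, 0, _, rfl⟩
      · rw [lie_X3_Sh]; exact zero_mem _
      · rw [lie_X4_Sh]; exact zero_mem _
    · simp only [Ring.lie_def, zero_mul, mul_zero, sub_zero]; exact zero_mem _
    · intro a b _ _ ha hb
      rw [Ring.lie_def] at ha hb ⊢; rw [add_mul, mul_add, add_sub_add_comm]; exact add_mem ha hb
    · intro c a _ ha
      rw [Ring.lie_def] at ha ⊢; rw [smul_mul_assoc, mul_smul_comm, ← smul_sub]; exact Submodule.smul_mem _ _ ha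
  · -- trivial intersection
    rw [eq_bot_iff]
    intro x hx
    rw [Submodule.mem_inf] at hx
    obtain ⟨hx1, hx2⟩ := hx
    rw [Submodule.mem_span_singleton] at hx2
    obtain ⟨c, rfl⟩ := hx2
    obtain ⟨p, q, r, hpqr⟩ := (mem_n1_iff α β _).mp hx1
    have e00 := congrFun (congrFun hpqr 0) 0
    simp [Sh, X4, Matrix.vecHead, Matrix.vecTail] at e00
    rw [e00]
    simp
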